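/- Let r ≥ 2 and identify the vertices of K_{2r} with Fin (2r), placed in this circular order on a circle. The set of non-antipodal edges of K_{2r} (all edges except the r edges {i, i+r}, 0 ≤ i ≤ r−1) can be partitioned into r parts, each spanning a star forest consisting of two vertex-disjoint stars with r − 1 edges each, such that within every part no two edges cross. In particular, these r parts together contain 2r(r−1) edges and, with the antipodal matching, account for all 2r² − r edges of K_{2r}. -/

import Mathlib

/-- A simple graph is a *star forest* iff each of its connected components is a
star `K_{1,m}` (`m ≥ 0`); equivalently it is acyclic and contains no path with
three edges, which is captured by this local condition on walks of length 3. -/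
def IsStarForest {V : Type*} (G : SimpleGraph V) : Prop :=
  ∀ a b c d : V, G.Adj a b → G.Adj b c → G.Adj c d → a = c ∨ b = d

/-- With `Fin n` placed in this circular order on a circle, `x` lies strictly
inside the open circular arc from `a` to `b` (going counterclockwise). -/
def InOpenArc {n : ℕ} (a b x : Fin n) : Prop :=
  0 < (x - a).val ∧ (x - a).val < (b - a).val

/-- Two chords on the circle points `Fin n` *cross* iff they have four distinct
endpoints and exactly one endpoint of the second chord lies in the open
circular arc from one endpoint of the first chord to the other. -/
def Cross {n : ℕ} (e f : Sym2 (Fin n)) : Prop :=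
  ∃ a b c d : Fin n, e = s(a, b) ∧ f = s(c, d) ∧
    a ≠ b ∧ c ≠ d ∧ a ≠ c ∧ a ≠ d ∧ b ≠ c ∧ b ≠ d ∧
    (InOpenArc a b c ↔ ¬ InOpenArc a b d)

/-- The vertex antipodal to `i` on the circle `Fin (2r)`. -/
def antipode (r : ℕ) (i : Fin (2 * r)) : Fin (2 * r) :=
  ⟨(i.val + r) % (2 * r), Nat.mod_lt _ (Nat.lt_of_le_of_lt (Nat.zero_le _) i.isLt)⟩

/-- The `r` antipodal edges `{i, i+r}` of `K_{2r}`. -/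
def antipodalEdges (r : ℕ) : Set (Sym2 (Fin (2 * r))) :=
  {e | ∃ i : Fin (2 * r), e = s(i, antipode r i)}

/-- The star centered at `i` whose leaves are the `r - 1` vertices
`i+1, …, i+(r-1)` (indices mod `2r`). -/
def starAt (r : ℕ) (i : Fin (2 * r)) : Set (Sym2 (Fin (2 * r))) :=
  {e | ∃ j : Fin (2 * r), e = s(i, j) ∧ 1 ≤ (j - i).val ∧ (j - i).val ≤ r - 1}

/-- A set of edges is a *star* iff all its edges share a common endpoint. -/
def IsStarEdgeSet {V : Type*} (S : Set (Sym2 V)) : Prop :=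
  ∃ c : V, ∀ e ∈ S, c ∈ e

/-- Two edge sets are *vertex-disjoint* iff no vertex lies in an edge of both. -/
def VertexDisjoint {V : Type*} (A B : Set (Sym2 V)) : Prop :=
  ∀ e ∈ A, ∀ f ∈ B, ∀ v : V, v ∈ e → v ∉ f


section Helpers

lemma modsmall {m a : ℕ} (h : a < m) : a % m = a := Nat.mod_eq_of_lt h

lemma modbig {m a : ℕ} (h1 : m ≤ a) (h2 : a < 2*m) : a % m = a - m := by
  rw [Nat.mod_eq_sub_mod h1, Nat.mod_eq_of_lt (by omega)]

lemma finsub_val {n : ℕ} [NeZero n] (a b : Fin n) :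
    (a - b).val = (a.val + n - b.val) % n := by
  rw [Fin.sub_def]
  show (n - b.val + a.val) % n = _
  congr 1
  have := b.isLt
  omega

lemma sub_rel {n : ℕ} [NeZero n] (a b : Fin n) :
    (a - b).val + b.val = a.val ∨ (a - b).val + b.val = a.val + n := by
  have ha := a.isLt; have hb := b.isLt
  rcases le_or_gt b.val a.val with h | h
  · left; rw [finsub_val, modbig (by omega) (by omega)]; omega
  · right; rw [finsub_val, modsmall (by omega)]; omega

lemma antipode_rel {r : ℕ} (i : Fin (2*r)) :
    (antipode r i).val = i.val + r ∨ (antipode r i).val + r = i.val := by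
  have hi := i.isLt
  show (i.val + r) % (2*r) = _ ∨ (i.val + r) % (2*r) + r = _
  rcases Nat.lt_or_ge i.val r with h | h
  · left; rw [modsmall (by omega)]
  · right; rw [modbig (by omega) (by omega)]; omega

lemma antipode_antipode {r : ℕ} (i : Fin (2*r)) : antipode r (antipode r i) = i := by
  have hi := i.isLt
  have h1 := antipode_rel i
  have h2 := antipode_rel (antipode r i)
  have h3 := (antipode r i).isLt
  have h4 := (antipode r (antipode r i)).isLt
  exact Fin.ext (by omega)

lemma dist_antipode {r : ℕ} (hr : 0 < r) (i : Fin (2*r)) : (antipode r i - i).val = r := by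
  haveI : NeZero (2*r) := ⟨by omega⟩
  have h1 := antipode_rel i
  have h2 := sub_rel (antipode r i) i
  have h3 := (antipode r i).isLt
  have h4 := (antipode r i - i).isLt
  have hi := i.isLt
  omega

lemma star_endpoint_dist {r : ℕ} (hr : 2 ≤ r) {c : Fin (2*r)} {e : Sym2 (Fin (2*r))}
    (he : e ∈ starAt r c) {v : Fin (2*r)} (hv : v ∈ e) : (v - c).val ≤ r - 1 := by
  haveI : NeZero (2*r) := ⟨by omega⟩
  obtain ⟨j, rfl, h1, h2⟩ := he
  rcases Sym2.mem_iff.mp hv with rfl | rfl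
  · have := sub_rel v v; have := (v - v).isLt; omega
  · exact h2

lemma anti_star_endpoint_dist {r : ℕ} (hr : 2 ≤ r) {c : Fin (2*r)} {e : Sym2 (Fin (2*r))}
    (he : e ∈ starAt r (antipode r c)) {v : Fin (2*r)} (hv : v ∈ e) : r ≤ (v - c).val := by
  haveI : NeZero (2*r) := ⟨by omega⟩
  have ht : (v - antipode r c).val ≤ r - 1 := star_endpoint_dist hr he hv
  have h1 := antipode_rel c
  have h2 := sub_rel v (antipode r c)
  have h3 := sub_rel v c
  have h4 := (antipode r c).isLt
  have h5 := v.isLt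
  have h6 := c.isLt
  have h7 := (v - c).isLt
  have h8 := (v - antipode r c).isLt
  omega

lemma star_center_mem {r : ℕ} {c : Fin (2*r)} {e : Sym2 (Fin (2*r))}
    (he : e ∈ starAt r c) : c ∈ e := by
  obtain ⟨j, rfl, -, -⟩ := he
  simp

lemma star_center_unique {r : ℕ} (hr : 2 ≤ r) {c c' : Fin (2*r)} {e : Sym2 (Fin (2*r))}
    (h : e ∈ starAt r c) (h' : e ∈ starAt r c') : c = c' := by
  haveI : NeZero (2*r) := ⟨by omega⟩
  obtain ⟨j, rfl, h1, h2⟩ := h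
  obtain ⟨j', he, h1', h2'⟩ := h'
  rcases Sym2.eq_iff.mp he with ⟨rfl, rfl⟩ | ⟨rfl, rfl⟩
  · rfl
  · exfalso
    have a1 := sub_rel j c
    have a2 := sub_rel c j
    have a3 := j.isLt; have a4 := c.isLt
    omega

lemma noCross_same {r : ℕ} (hr : 2 ≤ r) {c : Fin (2*r)} {e f : Sym2 (Fin (2*r))}
    (he : e ∈ starAt r c) (hf : f ∈ starAt r c) : ¬ Cross e f := by
  rintro ⟨a, b, x, y, rfl, rfl, hab, hxy, hax, hay, hbx, hby, -⟩
  have h1 := star_center_mem he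
  have h2 := star_center_mem hf
  rcases Sym2.mem_iff.mp h1 with rfl | rfl <;> rcases Sym2.mem_iff.mp h2 with h | h <;>
    simp_all

lemma noCross_diff {r : ℕ} (hr : 2 ≤ r) {c : Fin (2*r)} {e f : Sym2 (Fin (2*r))}
    (he : e ∈ starAt r c) (hf : f ∈ starAt r (antipode r c)) : ¬ Cross e f := by
  haveI : NeZero (2*r) := ⟨by omega⟩
  obtain ⟨j, rfl, h1, h2⟩ := he
  obtain ⟨j', rfl, h1', h2'⟩ := hf
  rintro ⟨a, b, x, y, hea, hfa, hab, hxy, hax, hay, hbx, hby, hiff⟩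
  simp only [InOpenArc] at hiff
  have A := antipode_rel c
  have B := dist_antipode (by omega) c
  have L1 := c.isLt; have L2 := j.isLt; have L3 := j'.isLt; have L4 := (antipode r c).isLt
  have S1 := sub_rel j c
  have S2 := sub_rel c j
  have S3 := sub_rel j' (antipode r c)
  have S4 := sub_rel j' c
  have S5 := sub_rel j' j
  have S6 := sub_rel (antipode r c) j
  have S7 := sub_rel (antipode r c) c
  have I1 := (j - c).isLt; have I2 := (c - j).isLt
  have I3 := (j' - antipode r c).isLt; have I4 := (j' - c).isLt
  have I5 := (j' - j).isLt; have I6 := (antipode r c - j).isLt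
  have I7 := (antipode r c - c).isLt
  rcases Sym2.eq_iff.mp hea.symm with ⟨rfl, rfl⟩ | ⟨rfl, rfl⟩ <;>
    rcases Sym2.eq_iff.mp hfa.symm with ⟨rfl, rfl⟩ | ⟨rfl, rfl⟩ <;>
    omega

lemma star_vdisj {r : ℕ} (hr : 2 ≤ r) (c : Fin (2*r)) :
    VertexDisjoint (starAt r c) (starAt r (antipode r c)) := by
  intro e he f hf v hv hv'
  have h1 := star_endpoint_dist hr he hv
  have h2 := anti_star_endpoint_dist hr hf hv'
  omega

lemma forest_in_star {r : ℕ} (hr : 2 ≤ r) {z a b x d : Fin (2*r)}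
    (hab : s(a,b) ∈ starAt r z) (hbx : s(b,x) ∈ starAt r z) (hxd : s(x,d) ∈ starAt r z)
    (hnbx : b ≠ x) : a = x ∨ b = d := by
  rcases Sym2.mem_iff.mp (star_center_mem hbx) with hb | hx
  · rcases Sym2.mem_iff.mp (star_center_mem hxd) with hx | hd
    · exact absurd (hb.symm.trans hx) hnbx
    · exact Or.inr (hb.symm.trans hd)
  · rcases Sym2.mem_iff.mp (star_center_mem hab) with ha | hb
    · exact Or.inl (ha.symm.trans hx)
    · exact absurd (hb.symm.trans hx) hnbx

lemma union_forest {r : ℕ} (hr : 2 ≤ r) (c : Fin (2*r)) :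
    IsStarForest (SimpleGraph.fromEdgeSet (starAt r c ∪ starAt r (antipode r c))) := by
  intro a b x d hab hbx hxd
  rw [SimpleGraph.fromEdgeSet_adj] at hab hbx hxd
  obtain ⟨hab, -⟩ := hab
  obtain ⟨hbx, hnbx⟩ := hbx
  obtain ⟨hxd, -⟩ := hxd
  have vd := star_vdisj hr c
  rcases hab with hab | hab <;> rcases hbx with hbx | hbx <;> rcases hxd with hxd | hxd
  · exact forest_in_star hr hab hbx hxd hnbx
  · exact absurd (Sym2.mem_mk_left x d) (vd _ hbx _ hxd x (Sym2.mem_mk_right b x))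
  · exact absurd (Sym2.mem_mk_left b x) (vd _ hab _ hbx b (Sym2.mem_mk_right a b))
  · exact absurd (Sym2.mem_mk_left b x) (vd _ hab _ hbx b (Sym2.mem_mk_right a b))
  · exact absurd (Sym2.mem_mk_right a b) (vd _ hbx _ hab b (Sym2.mem_mk_left b x))
  · exact absurd (Sym2.mem_mk_right a b) (vd _ hbx _ hab b (Sym2.mem_mk_left b x))
  · exact absurd (Sym2.mem_mk_right b x) (vd _ hxd _ hbx x (Sym2.mem_mk_left x d))
  · exact forest_in_star hr hab hbx hxd hnbx

open Fin.NatCast in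
lemma star_ncard {r : ℕ} (hr : 2 ≤ r) (c : Fin (2*r)) : (starAt r c).ncard = r - 1 := by
  haveI : NeZero (2*r) := ⟨by omega⟩
  have himg : starAt r c = (fun k : ℕ => s(c, c + (k : Fin (2*r)))) '' (Set.Icc 1 (r-1)) := by
    ext e
    constructor
    · rintro ⟨j, rfl, h1, h2⟩
      refine ⟨(j - c).val, ⟨h1, h2⟩, ?_⟩
      show s(c, c + (((j - c).val : ℕ) : Fin (2*r))) = s(c, j)
      rw [Fin.cast_val_eq_self]
      have hcj : c + (j - c) = j := by abel
      rw [hcj]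
    · rintro ⟨k, ⟨hk1, hk2⟩, rfl⟩
      refine ⟨c + (k : Fin (2*r)), rfl, ?_, ?_⟩ <;>
        rw [add_sub_cancel_left, Fin.val_cast_of_lt (by omega)] <;> omega
  have hinj : Set.InjOn (fun k : ℕ => s(c, c + (k : Fin (2*r)))) (Set.Icc 1 (r-1)) := by
    intro k1 hk1 k2 hk2 h
    simp only [Set.mem_Icc] at hk1 hk2
    obtain ⟨hk1a, hk1b⟩ := hk1
    obtain ⟨hk2a, hk2b⟩ := hk2
    simp only [Sym2.eq_iff] at h
    rcases h with ⟨-, h⟩ | ⟨h, -⟩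
    · have h2 := congrArg Fin.val (add_left_cancel h)
      rw [Fin.val_cast_of_lt (by omega : k1 < 2*r), Fin.val_cast_of_lt (by omega : k2 < 2*r)] at h2
      exact h2
    · exfalso
      have h0 : ((k2 : Fin (2*r)) : ℕ) = 0 := by
        have := congrArg Fin.val (add_eq_left.mp h.symm)
        simpa using this
      rw [Fin.val_cast_of_lt (by omega : k2 < 2*r)] at h0
      omega
  rw [himg, Set.ncard_image_of_injOn hinj, ← Finset.coe_Icc, Set.ncard_coe_finset,
    Nat.card_Icc]
  omega

open Fin.NatCast in
lemma antipodal_ncard {r : ℕ} (hr : 2 ≤ r) : (antipodalEdges r).ncard = r := by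
  haveI : NeZero (2*r) := ⟨by omega⟩
  have himg : antipodalEdges r
      = (fun k : ℕ => s((k : Fin (2*r)), antipode r (k : Fin (2*r)))) '' (Set.Iio r) := by
    ext e
    constructor
    · rintro ⟨i, rfl⟩
      rcases Nat.lt_or_ge i.val r with h | h
      · refine ⟨i.val, Set.mem_Iio.mpr h, ?_⟩
        show s(((i.val : ℕ) : Fin (2*r)), antipode r ((i.val : ℕ) : Fin (2*r)))
            = s(i, antipode r i)
        rw [Fin.cast_val_eq_self]
      · have hival := i.isLt
        refine ⟨i.val - r, Set.mem_Iio.mpr (by omega), ?_⟩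
        have h1 : ((i.val - r : ℕ) : Fin (2*r)) = antipode r i := by
          apply Fin.ext
          rw [Fin.val_cast_of_lt (by omega)]
          rcases antipode_rel i with h2 | h2 <;>
            · have := (antipode r i).isLt; omega
        show s(((i.val - r : ℕ) : Fin (2*r)), antipode r ((i.val - r : ℕ) : Fin (2*r)))
            = s(i, antipode r i)
        rw [h1, antipode_antipode]
        exact Sym2.eq_swap
    · rintro ⟨k, hk, rfl⟩
      exact ⟨_, rfl⟩
  have hinj : Set.InjOn (fun k : ℕ => s((k : Fin (2*r)), antipode r (k : Fin (2*r))))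
      (Set.Iio r) := by
    intro k1 hk1 k2 hk2 h
    simp only [Set.mem_Iio] at hk1 hk2
    simp only [Sym2.eq_iff] at h
    rcases h with ⟨h, -⟩ | ⟨h, -⟩
    · have h2 := congrArg Fin.val h
      rw [Fin.val_cast_of_lt (by omega : k1 < 2*r), Fin.val_cast_of_lt (by omega : k2 < 2*r)] at h2
      exact h2
    · exfalso
      have h2 := congrArg Fin.val h
      rw [Fin.val_cast_of_lt (by omega : k1 < 2*r)] at h2
      have h3 := antipode_rel ((k2 : ℕ) : Fin (2*r))
      rw [Fin.val_cast_of_lt (by omega : k2 < 2*r)] at h3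
      omega
  rw [himg, Set.ncard_image_of_injOn hinj, ← Finset.coe_Iio, Set.ncard_coe_finset,
    Nat.card_Iio]

lemma top_ncard {r : ℕ} (hr : 2 ≤ r) :
    ((⊤ : SimpleGraph (Fin (2*r))).edgeSet).ncard = 2 * r ^ 2 - r := by
  rw [← SimpleGraph.coe_edgeFinset, Set.ncard_coe_finset,
    SimpleGraph.card_edgeFinset_top_eq_card_choose_two, Fintype.card_fin,
    Nat.choose_two_right]
  have hsq : r ^ 2 = r * r := pow_two r
  have hle : r ≤ r * r := Nat.le_mul_of_pos_left r (by omega)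
  have h1 : 2*r*(2*r-1) = 2*(2*r^2 - r) := by
    zify [show (1:ℕ) ≤ 2*r by omega, show r ≤ 2*r^2 by omega]
    ring
  rw [h1, Nat.mul_div_cancel_left _ (by norm_num : 0 < 2)]

lemma anti_subset_top {r : ℕ} (hr : 2 ≤ r) :
    antipodalEdges r ⊆ (⊤ : SimpleGraph (Fin (2*r))).edgeSet := by
  rintro e ⟨i, rfl⟩
  rw [SimpleGraph.edgeSet_top]
  simp only [Set.mem_compl_iff, Sym2.mem_diagSet, Sym2.mk_isDiag_iff]
  intro h
  have h1 := antipode_rel i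
  have h2 := i.isLt
  have h3 := congrArg Fin.val h
  omega

lemma eq_antipode_of_dist {r : ℕ} (hr : 2 ≤ r) {a b : Fin (2*r)}
    (h : (b - a).val = r) : b = antipode r a := by
  haveI : NeZero (2*r) := ⟨by omega⟩
  have h1 := sub_rel b a
  have h2 := antipode_rel a
  have h3 := a.isLt; have h4 := b.isLt; have h5 := (antipode r a).isLt
  exact Fin.ext (by omega)

lemma exists_star {r : ℕ} (hr : 2 ≤ r) {e : Sym2 (Fin (2*r))}
    (he : e ∈ (⊤ : SimpleGraph (Fin (2*r))).edgeSet) (hna : e ∉ antipodalEdges r) :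
    ∃ z : Fin (2*r), e ∈ starAt r z := by
  haveI : NeZero (2*r) := ⟨by omega⟩
  induction e using Sym2.ind with | _ a b =>
  rw [SimpleGraph.edgeSet_top, Set.mem_compl_iff, Sym2.mem_diagSet, Sym2.mk_isDiag_iff] at he
  have hne : a.val ≠ b.val := fun hv => he (Fin.ext hv)
  have hd1 : (b - a).val ≠ r := by
    intro h
    exact hna ⟨a, by rw [← eq_antipode_of_dist hr h]⟩
  have hd2 : (a - b).val ≠ r := by
    intro h
    exact hna ⟨b, by rw [← eq_antipode_of_dist hr h]; exact Sym2.eq_swap⟩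
  have S1 := sub_rel b a
  have S2 := sub_rel a b
  have L1 := a.isLt; have L2 := b.isLt
  have I1 := (b - a).isLt; have I2 := (a - b).isLt
  rcases Nat.lt_or_ge ((b - a).val) r with h | h
  · exact ⟨a, b, rfl, by omega, by omega⟩
  · exact ⟨b, a, Sym2.eq_swap.symm, by omega, by omega⟩

def emb {r : ℕ} (i : Fin r) : Fin (2*r) := ⟨i.val, by have := i.isLt; omega⟩

lemma center_index {r : ℕ} (hr : 2 ≤ r) (z : Fin (2*r)) :
    ∃ i : Fin r, z = emb i ∨ z = antipode r (emb i) := by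
  have hz := z.isLt
  rcases Nat.lt_or_ge z.val r with h | h
  · exact ⟨⟨z.val, h⟩, Or.inl (Fin.ext rfl)⟩
  · refine ⟨⟨z.val - r, by omega⟩, Or.inr (Fin.ext ?_)⟩
    show z.val = (z.val - r + r) % (2*r)
    rw [modsmall (by omega)]
    omega

lemma emb_anti_inj {r : ℕ} (hr : 2 ≤ r) {i i' : Fin r} {c : Fin (2*r)}
    (h : c = emb i ∨ c = antipode r (emb i))
    (h' : c = emb i' ∨ c = antipode r (emb i')) : i = i' := by
  have a1 := antipode_rel (emb i); have a2 := antipode_rel (emb i')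
  have b1 : (emb i).val = i.val := rfl
  have b2 : (emb i').val = i'.val := rfl
  have c1 := i.isLt; have c2 := i'.isLt
  apply Fin.ext
  rcases h with rfl | rfl <;> rcases h' with h' | h' <;>
    · have := congrArg Fin.val h'
      omega

lemma star_subset {r : ℕ} (hr : 2 ≤ r) (c : Fin (2*r)) :
    starAt r c ⊆ (⊤ : SimpleGraph (Fin (2*r))).edgeSet \ antipodalEdges r := by
  haveI : NeZero (2*r) := ⟨by omega⟩
  rintro e ⟨j, rfl, h1, h2⟩
  constructor
  · rw [SimpleGraph.edgeSet_top]
    simp only [Set.mem_compl_iff, Sym2.mem_diagSet, Sym2.mk_isDiag_iff]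
    intro hcj
    rw [← hcj] at h1
    have := sub_rel c c
    have := (c - c).isLt
    omega
  · rintro ⟨i0, hi0⟩
    rcases Sym2.eq_iff.mp hi0 with ⟨hc, hj⟩ | ⟨hc, hj⟩
    · rw [hc, hj, dist_antipode (by omega)] at h2
      omega
    · have hkey : (i0 - antipode r i0).val = r := by
        have h5 := sub_rel i0 (antipode r i0)
        have h6 := antipode_rel i0
        have h7 := (i0 - antipode r i0).isLt
        have h8 := i0.isLt
        have h9 := (antipode r i0).isLt
        omega
      rw [hc, hj, hkey] at h2
      omega

end Helpers

/-- Let `r ≥ 2` and identify the vertices of `K_{2r}` with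
`Fin (2r)`, placed in this circular order on a circle.  The set of
non-antipodal edges of `K_{2r}` (all edges except the `r` edges `{i, i+r}`)
can be partitioned into `r` parts, each spanning a star forest consisting of
two vertex-disjoint stars with `r − 1` edges each, such that within every part
no two edges cross.  In particular these `r` parts together contain
`2r(r−1)` edges and, with the `r` antipodal edges, account for all
`2r² − r` edges of `K_{2r}`. -/
theorem noncrossing_star_forest_partition_of_nonantipodal_edges
    (r : ℕ) (hr : 2 ≤ r) :
    (∃ P : Fin r → Set (Sym2 (Fin (2 * r))),
      (∀ i, P i ⊆ (⊤ : SimpleGraph (Fin (2 * r))).edgeSet \ antipodalEdges r) ∧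
      (∀ e ∈ (⊤ : SimpleGraph (Fin (2 * r))).edgeSet \ antipodalEdges r,
        ∃! i, e ∈ P i) ∧
      (∀ i, IsStarForest (SimpleGraph.fromEdgeSet (P i))) ∧
      (∀ i, ∃ c : Fin (2 * r), P i = starAt r c ∪ starAt r (antipode r c) ∧
        VertexDisjoint (starAt r c) (starAt r (antipode r c)) ∧
        (starAt r c).ncard = r - 1 ∧ (starAt r (antipode r c)).ncard = r - 1) ∧
      (∀ i, ∀ e ∈ P i, ∀ f ∈ P i, ¬ Cross e f)) ∧
    ((⊤ : SimpleGraph (Fin (2 * r))).edgeSet \ antipodalEdges r).ncard =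
      2 * r * (r - 1) ∧
    (antipodalEdges r).ncard = r ∧
    ((⊤ : SimpleGraph (Fin (2 * r))).edgeSet).ncard = 2 * r ^ 2 - r := by
  haveI : NeZero (2*r) := ⟨by omega⟩
  set P : Fin r → Set (Sym2 (Fin (2 * r))) :=
    fun i => starAt r (emb i) ∪ starAt r (antipode r (emb i)) with hP
  have htot : ((⊤ : SimpleGraph (Fin (2 * r))).edgeSet).ncard = 2 * r ^ 2 - r :=
    top_ncard hr
  have hanti : (antipodalEdges r).ncard = r := antipodal_ncard hr
  have hdiff : ((⊤ : SimpleGraph (Fin (2 * r))).edgeSet \ antipodalEdges r).ncard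
      = 2 * r * (r - 1) := by
    rw [Set.ncard_diff (anti_subset_top hr) (Set.toFinite _), htot, hanti]
    have hsq : r ^ 2 = r * r := pow_two r
    have hle : r ≤ r * r := Nat.le_mul_of_pos_left r (by omega)
    have h2 : 2*r*(r-1) = 2*(r*r) - 2*r := by
      zify [show (1:ℕ) ≤ r by omega, show 2*r ≤ 2*(r*r) by omega]
      ring
    omega
  refine ⟨⟨P, ?_, ?_, ?_, ?_, ?_⟩, hdiff, hanti, htot⟩
  · intro i e he
    rcases he with he | he
    · exact star_subset hr _ he
    · exact star_subset hr _ he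
  · rintro e ⟨het, hena⟩
    obtain ⟨z, hz⟩ := exists_star hr het hena
    obtain ⟨i, hi⟩ := center_index hr z
    refine ⟨i, ?_, ?_⟩
    · rcases hi with h | h
      · exact Or.inl (h ▸ hz)
      · exact Or.inr (h ▸ hz)
    · intro i' hi'
      have : ∃ z' : Fin (2*r), (z' = emb i' ∨ z' = antipode r (emb i')) ∧ e ∈ starAt r z' := by
        rcases hi' with h | h
        · exact ⟨emb i', Or.inl rfl, h⟩
        · exact ⟨antipode r (emb i'), Or.inr rfl, h⟩
      obtain ⟨z', hz'c, hz'⟩ := this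
      have hzz : z = z' := star_center_unique hr hz hz'
      exact emb_anti_inj hr (hzz ▸ hz'c) hi
  · intro i
    exact union_forest hr (emb i)
  · intro i
    exact ⟨emb i, rfl, star_vdisj hr _, star_ncard hr _, star_ncard hr _⟩
  · intro i e he f hf
    rcases he with he | he <;> rcases hf with hf | hf
    · exact noCross_same hr he hf
    · exact noCross_diff hr he hf
    · exact noCross_diff hr he (by rw [antipode_antipode]; exact hf)
    · exact noCross_same hr he hf
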